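/- Let n ≥ 6 be an even integer and let π ∈ S_n be such that the permutation graph G_π is connected with domination number n/2. Then exactly one of the vertices 1 and 2 is a leaf of G_π, and exactly one of the vertices n−1 and n is a leaf of G_π. -/

import Mathlib

set_option linter.unusedSectionVars false
set_option maxHeartbeats 1000000


/-- The permutation graph of `π`: vertices `0,…,n-1` (0-indexed version of `1,…,n`),
with `i < j` adjacent iff `π⁻¹ i > π⁻¹ j`. -/
def permGraph {n : ℕ} (π : Equiv.Perm (Fin n)) : SimpleGraph (Fin n) where
  Adj i j := (i < j ∧ π.symm j < π.symm i) ∨ (j < i ∧ π.symm i < π.symm j)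
  symm := by constructor; intro i j h; tauto
  loopless := by constructor; intro i h; rcases h with ⟨h, _⟩ | ⟨h, _⟩ <;> exact lt_irrefl i h

/-- `D` dominates `G`: every vertex is in `D` or adjacent to an element of `D`. -/
def Dominates {V : Type*} (G : SimpleGraph V) (D : Set V) : Prop :=
  ∀ v, v ∈ D ∨ ∃ d ∈ D, G.Adj v d

/-- The domination number: minimum cardinality of a dominating set. -/
noncomputable def domNumber {V : Type*} [Fintype V] (G : SimpleGraph V) : ℕ :=
  sInf {k | ∃ D : Finset V, D.card = k ∧ Dominates G ↑D}

/-- Closed neighborhood `N[x]`. -/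
def closedNbhd {V : Type*} (G : SimpleGraph V) (x : V) : Set V :=
  {y | y = x ∨ G.Adj x y}

/-- Degree of a vertex. -/
noncomputable def deg {V : Type*} (G : SimpleGraph V) (v : V) : ℕ :=
  (G.neighborSet v).ncard

section Infra

variable {V : Type*} [Fintype V] [DecidableEq V] (G : SimpleGraph V) [DecidableRel G.Adj]

lemma domNumber_le (D : Finset V) (h : Dominates G ↑D) : domNumber G ≤ D.card :=
  Nat.sInf_le ⟨D, rfl, h⟩

lemma exists_min_dom : ∃ D : Finset V, D.card = domNumber G ∧ Dominates G ↑D := by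
  have hne : {k | ∃ D : Finset V, D.card = k ∧ Dominates G ↑D}.Nonempty :=
    ⟨(Finset.univ : Finset V).card, Finset.univ, rfl, fun v => Or.inl (by simp)⟩
  obtain ⟨D, hc, hd⟩ := Nat.sInf_mem hne
  exact ⟨D, hc, hd⟩

lemma orePartial (T : Finset V) (hT : ∀ v ∈ T, ∃ u ∈ T, G.Adj v u) :
    ∃ D ⊆ T, 2 * D.card ≤ T.card ∧ ∀ v ∈ T, v ∈ D ∨ ∃ d ∈ D, G.Adj v d := by
  classical
  set P : Finset V → Prop := fun D => ∀ v ∈ T, v ∈ D ∨ ∃ d ∈ D, G.Adj v d with hP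
  have hPd : DecidablePred P := fun D => by unfold P; infer_instance
  set F : Finset (Finset V) := T.powerset.filter P with hF
  have hTF : T ∈ F := by
    simp only [hF, Finset.mem_filter, Finset.mem_powerset]
    exact ⟨subset_rfl, fun v hv => Or.inl hv⟩
  obtain ⟨D, hDF, hmin⟩ := F.exists_min_image Finset.card ⟨T, hTF⟩
  simp only [hF, Finset.mem_filter, Finset.mem_powerset] at hDF
  obtain ⟨hDT, hDdom⟩ := hDF
  -- every d ∈ D has a neighbor in T \ D
  have key : ∀ d ∈ D, ∃ u ∈ T \ D, G.Adj d u := by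
    intro d hd
    by_contra hcon
    push_neg at hcon
    have hsub : ∀ u ∈ T, G.Adj d u → u ∈ D := by
      intro u hu hadj
      by_contra hu2
      exact hcon u (Finset.mem_sdiff.2 ⟨hu, hu2⟩) hadj
    have hD' : P (D.erase d) := by
      intro v hv
      by_cases hvd : v = d
      · subst hvd
        obtain ⟨u, hu, hadj⟩ := hT v hv
        have : u ∈ D := hsub u hu hadj
        exact Or.inr ⟨u, Finset.mem_erase.2 ⟨fun h => G.ne_of_adj hadj h.symm, this⟩, hadj⟩
      · rcases hDdom v hv with hvD | ⟨d', hd', hadj⟩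
        · exact Or.inl (Finset.mem_erase.2 ⟨hvd, hvD⟩)
        · by_cases hdd : d' = d
          · subst hdd
            have : v ∈ D := hsub v hv (G.adj_symm hadj)
            exact Or.inl (Finset.mem_erase.2 ⟨hvd, this⟩)
          · exact Or.inr ⟨d', Finset.mem_erase.2 ⟨hdd, hd'⟩, hadj⟩
    have hmem : D.erase d ∈ F := by
      simp only [hF, Finset.mem_filter, Finset.mem_powerset]
      exact ⟨(Finset.erase_subset _ _).trans hDT, hD'⟩
    have := hmin _ hmem
    have hlt : (D.erase d).card < D.card := Finset.card_erase_lt_of_mem hd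
    omega
  -- T \ D also dominates T
  have hTD : T \ D ∈ F := by
    simp only [hF, Finset.mem_filter, Finset.mem_powerset]
    refine ⟨Finset.sdiff_subset, fun v hv => ?_⟩
    by_cases hvD : v ∈ D
    · obtain ⟨u, hu, hadj⟩ := key v hvD
      exact Or.inr ⟨u, hu, hadj⟩
    · exact Or.inl (Finset.mem_sdiff.2 ⟨hv, hvD⟩)
  have h1 : D.card ≤ (T \ D).card := hmin _ hTD
  have h2 : (T \ D).card = T.card - D.card := Finset.card_sdiff_of_subset hDT
  have h3 : D.card ≤ T.card := Finset.card_le_card hDT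
  exact ⟨D, hDT, by omega, hDdom⟩

lemma reduceContra (hev : Even (Fintype.card V))
    (hdom : domNumber G = Fintype.card V / 2)
    (S C : Finset V) (hcov : ∀ c ∈ C, c ∈ S ∨ ∃ s ∈ S, G.Adj c s)
    (hclos : ∀ v, v ∉ C → ∃ u, u ∉ C ∧ G.Adj v u)
    (hbig : 2 * S.card + 1 ≤ C.card) : False := by
  classical
  set T : Finset V := Finset.univ \ C with hTdef
  have hT : ∀ v ∈ T, ∃ u ∈ T, G.Adj v u := by
    intro v hv
    obtain ⟨u, hu, hadj⟩ := hclos v (by simpa [hTdef] using hv)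
    exact ⟨u, by simp [hTdef, hu], hadj⟩
  obtain ⟨D', hD'T, hD'card, hD'dom⟩ := orePartial G T hT
  have hdomin : Dominates G ↑(S ∪ D') := by
    intro v
    by_cases hvC : v ∈ C
    · rcases hcov v hvC with h | ⟨s, hs, hadj⟩
      · exact Or.inl (by simp [h])
      · exact Or.inr ⟨s, by simp [hs], hadj⟩
    · rcases hD'dom v (by simp [hTdef, hvC]) with h | ⟨d, hd, hadj⟩
      · exact Or.inl (by simp [h])
      · exact Or.inr ⟨d, by simp [hd], hadj⟩
  have hle := domNumber_le G _ hdomin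
  have hcard : (S ∪ D').card ≤ S.card + D'.card := Finset.card_union_le _ _
  have hTcard : T.card = Fintype.card V - C.card := by
    rw [hTdef, Finset.card_sdiff_of_subset (Finset.subset_univ C), Finset.card_univ]
  have hCle : C.card ≤ Fintype.card V := by
    rw [← Finset.card_univ]; exact Finset.card_le_card (Finset.subset_univ C)
  have hev2 : Fintype.card V % 2 = 0 := Nat.even_iff.1 hev
  omega

lemma noiso (hconn : G.Connected) (hcard : 2 ≤ Fintype.card V) :
    ∀ v : V, ∃ u, G.Adj v u := by
  intro v
  obtain ⟨w, hw⟩ := Fintype.exists_ne_of_one_lt_card (by omega) v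
  obtain ⟨p⟩ := hconn.preconnected v w
  cases p with
  | nil => exact absurd rfl hw.symm
  | cons h _ => exact ⟨_, h⟩

lemma walk_confined {A : Set V} (hA : ∀ u ∈ A, ∀ v, G.Adj u v → v ∈ A) :
    ∀ {u v : V} (_ : G.Walk u v), u ∈ A → v ∈ A := by
  intro u v w
  induction w with
  | nil => exact id
  | cons h p ih => intro hu; exact ih (hA _ hu _ h)

lemma walk_cross {C : Finset V} :
    ∀ {a b : V} (_ : G.Walk a b), a ∈ C → b ∉ C → ∃ u ∈ C, ∃ v, v ∉ C ∧ G.Adj u v := by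
  intro a b w
  induction w with
  | nil => intro ha hb; exact absurd ha hb
  | @cons u c v h p ih =>
    intro ha hb
    by_cases hc : c ∈ C
    · exact ih hc hb
    · exact ⟨u, ha, c, hc, h⟩


lemma exists_matching (hconn : G.Connected) (hn : 2 ≤ Fintype.card V)
    (hev : Even (Fintype.card V))
    (hdom : domNumber G = Fintype.card V / 2) :
    ∃ m : V → V, (∀ v, G.Adj v (m v)) ∧ (∀ v, m (m v) = v) := by
  classical
  obtain ⟨D, hDcard, hDdom⟩ := exists_min_dom G
  have hniso := noiso G hconn hn
  have hncard : Fintype.card V % 2 = 0 := Nat.even_iff.1 hev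
  have hDhalf : D.card = Fintype.card V / 2 := by rw [hDcard, hdom]
  have hDout : ∀ v ∈ D, ∃ u, u ∉ D ∧ G.Adj v u := by
    intro v hv
    by_contra hcon
    push_neg at hcon
    have hsub : ∀ u, G.Adj v u → u ∈ D := by
      intro u hadj
      by_contra h2
      exact (hcon u h2) hadj
    have hdom' : Dominates G ↑(D.erase v) := by
      intro w
      by_cases hwv : w = v
      · subst hwv
        obtain ⟨u, hu⟩ := hniso w
        exact Or.inr ⟨u, by
          simp only [Finset.coe_erase, Set.mem_diff, Finset.mem_coe, Set.mem_singleton_iff]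
          exact ⟨hsub u hu, (G.ne_of_adj hu).symm⟩, hu⟩
      · rcases hDdom w with hwD | ⟨e, he, hadj⟩
        · exact Or.inl (by
            simp only [Finset.coe_erase, Set.mem_diff, Finset.mem_coe, Set.mem_singleton_iff]
            exact ⟨hwD, hwv⟩)
        · by_cases hev' : e = v
          · subst hev'
            have : w ∈ D := hsub w (G.adj_symm hadj)
            exact Or.inl (by
              simp only [Finset.coe_erase, Set.mem_diff, Finset.mem_coe, Set.mem_singleton_iff]
              exact ⟨this, hwv⟩)
          · exact Or.inr ⟨e, by
              simp only [Finset.coe_erase, Set.mem_diff, Finset.mem_coe, Set.mem_singleton_iff]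
              exact ⟨he, hev'⟩, hadj⟩
    have hle := domNumber_le G _ hdom'
    have hlt : (D.erase v).card < D.card := Finset.card_erase_lt_of_mem hv
    omega
  -- Hall's condition
  set t : {a // a ∈ D} → Finset V := fun a => G.neighborFinset ↑a \ D with htdef
  have hall : ∀ s : Finset {a // a ∈ D}, s.card ≤ (s.biUnion t).card := by
    intro A
    by_contra hcon
    push_neg at hcon
    set B : Finset V := (D \ A.image Subtype.val) ∪ A.biUnion t with hBdef
    have hBdom : Dominates G ↑B := by
      intro v
      by_cases hvD : v ∈ D
      · by_cases hvA : v ∈ A.image Subtype.val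
        · obtain ⟨u, huD, hadj⟩ := hDout v hvD
          refine Or.inr ⟨u, ?_, hadj⟩
          simp only [hBdef, Finset.coe_union, Set.mem_union, Finset.mem_coe]
          right
          rw [Finset.mem_biUnion]
          obtain ⟨a, hvA', hveq⟩ := Finset.mem_image.1 hvA
          refine ⟨a, hvA', ?_⟩
          simp only [htdef, Finset.mem_sdiff, SimpleGraph.mem_neighborFinset, hveq]
          exact ⟨hadj, huD⟩
        · exact Or.inl (by
            simp only [hBdef, Finset.coe_union, Set.mem_union, Finset.mem_coe,
              Finset.mem_sdiff]
            exact Or.inl ⟨hvD, hvA⟩)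
      · rcases hDdom v with h | ⟨e, he, hadj⟩
        · exact absurd (Finset.mem_coe.1 h) hvD
        · have heD : e ∈ D := he
          by_cases heA : e ∈ A.image Subtype.val
          · refine Or.inl ?_
            simp only [hBdef, Finset.coe_union, Set.mem_union, Finset.mem_coe]
            right
            rw [Finset.mem_biUnion]
            obtain ⟨a, haA, haeq⟩ := Finset.mem_image.1 heA
            refine ⟨a, haA, ?_⟩
            simp only [htdef, Finset.mem_sdiff, SimpleGraph.mem_neighborFinset, haeq]
            exact ⟨G.adj_symm hadj, hvD⟩
          · exact Or.inr ⟨e, by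
              simp only [hBdef, Finset.coe_union, Set.mem_union, Finset.mem_coe,
                Finset.mem_sdiff]
              exact Or.inl ⟨heD, heA⟩, hadj⟩
    have himg : A.image Subtype.val ⊆ D := by
      intro u hu
      obtain ⟨a, _, haeq⟩ := Finset.mem_image.1 hu
      exact haeq ▸ a.2
    have h1 : (D \ A.image Subtype.val).card = D.card - A.card := by
      rw [Finset.card_sdiff_of_subset himg, Finset.card_image_of_injective _ Subtype.val_injective]
    have h2 : B.card ≤ (D \ A.image Subtype.val).card + (A.biUnion t).card :=
      Finset.card_union_le _ _
    have h3 : A.card ≤ D.card := by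
      rw [← Finset.card_image_of_injective A Subtype.val_injective]
      exact Finset.card_le_card himg
    have hle := domNumber_le G B hBdom
    omega
  obtain ⟨f, hfinj, hfmem⟩ := (Finset.all_card_le_biUnion_card_iff_exists_injective t).1 hall
  have hfD : ∀ a, f a ∉ D ∧ G.Adj ↑a (f a) := by
    intro a
    have := hfmem a
    simp only [htdef, Finset.mem_sdiff, SimpleGraph.mem_neighborFinset] at this
    exact ⟨this.2, this.1⟩
  set Dc : Finset V := Finset.univ \ D with hDc
  have hmemDc : ∀ v : V, v ∉ D → v ∈ Dc := by
    intro v h; simp [hDc, h]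
  have hDcmem : ∀ v : V, v ∈ Dc → v ∉ D := by
    intro v h; simp only [hDc, Finset.mem_sdiff] at h; exact h.2
  have hcards : D.card = Dc.card := by
    rw [hDc, Finset.card_sdiff_of_subset (Finset.subset_univ _), Finset.card_univ]
    omega
  set g : {a // a ∈ D} → {u // u ∈ Dc} := fun a => ⟨f a, hmemDc _ (hfD a).1⟩ with hg
  have hginj : Function.Injective g := by
    intro a b hab
    exact hfinj (congrArg Subtype.val hab)
  have hgbij : Function.Bijective g := by
    rw [Fintype.bijective_iff_injective_and_card]
    refine ⟨hginj, by simp only [Fintype.card_coe]; omega⟩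
  set e := Equiv.ofBijective g hgbij with he
  have heapp : ∀ a, (e a : V) = f a := fun a => rfl
  set m : V → V := fun v => if h : v ∈ D then ↑(e ⟨v, h⟩) else ↑(e.symm ⟨v, hmemDc v h⟩)
    with hm
  have hm1 : ∀ (v : V) (h : v ∈ D), m v = ↑(e ⟨v, h⟩) := by
    intro v h; simp only [hm]; rw [dif_pos h]
  have hm2 : ∀ (v : V) (h : v ∉ D), m v = ↑(e.symm ⟨v, hmemDc v h⟩) := by
    intro v h; simp only [hm]; rw [dif_neg h]
  refine ⟨m, ?_, ?_⟩
  · intro v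
    by_cases h : v ∈ D
    · rw [hm1 v h, heapp]
      exact (hfD ⟨v, h⟩).2
    · rw [hm2 v h]
      set a := e.symm ⟨v, hmemDc v h⟩ with ha
      have h2 : e a = ⟨v, hmemDc v h⟩ := by rw [ha, Equiv.apply_symm_apply]
      have h3 : f a = v := by rw [← heapp a, h2]
      exact G.adj_symm (h3 ▸ (hfD a).2)
  · intro v
    by_cases h : v ∈ D
    · rw [hm1 v h]
      have hnotD : (↑(e ⟨v, h⟩) : V) ∉ D := hDcmem _ (e ⟨v, h⟩).2
      rw [hm2 _ hnotD]
      have heq : (⟨↑(e ⟨v, h⟩), hmemDc _ hnotD⟩ : {u // u ∈ Dc}) = e ⟨v, h⟩ :=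
        Subtype.ext rfl
      rw [heq, Equiv.symm_apply_apply]
    · rw [hm2 v h]
      have hinD : (↑(e.symm ⟨v, hmemDc v h⟩) : V) ∈ D := (e.symm ⟨v, hmemDc v h⟩).2
      rw [hm1 _ hinD]
      have heq : (⟨↑(e.symm ⟨v, hmemDc v h⟩), hinD⟩ : {a // a ∈ D}) = e.symm ⟨v, hmemDc v h⟩ :=
        Subtype.ext rfl
      rw [heq, Equiv.apply_symm_apply]


lemma L1 (hconn : G.Connected) (hn : 6 ≤ Fintype.card V) (hev : Even (Fintype.card V))
    (hdom : domNumber G = Fintype.card V / 2)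
    (x : V) (hx : 2 ≤ (G.neighborFinset x).card)
    (hy : ∀ y ∈ G.neighborFinset x, 2 ≤ (G.neighborFinset y).card) : False := by
  classical
  obtain ⟨m, hmadj, hminv⟩ := exists_matching G hconn (by omega) hev hdom
  have hminj : Function.Injective m := Function.LeftInverse.injective hminv
  set Nx := G.neighborFinset x with hNx
  set d := Nx.card with hd
  set W : Finset V := Finset.univ.filter
    (fun v => v ≠ x ∧ v ∉ Nx ∧ G.neighborFinset v ⊆ Nx) with hWdef
  set C : Finset V := insert x Nx ∪ W with hCdef
  have hxNx : x ∉ Nx := by simp [hNx]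
  have hxW : x ∉ W := by simp [hWdef]
  have hWfacts : ∀ w ∈ W, w ≠ x ∧ w ∉ Nx ∧ G.neighborFinset w ⊆ Nx := by
    intro w hw
    simpa [hWdef] using hw
  have hmW : ∀ w ∈ W, m w ∈ Nx := by
    intro w hw
    exact (hWfacts w hw).2.2 (by rw [SimpleGraph.mem_neighborFinset]; exact hmadj w)
  have hmx : m x ∈ Nx := by
    rw [hNx, SimpleGraph.mem_neighborFinset]; exact hmadj x
  have himgsub : (insert x W).image m ⊆ Nx := by
    intro u hu
    obtain ⟨a, ha, haeq⟩ := Finset.mem_image.1 hu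
    rcases Finset.mem_insert.1 ha with h | h
    · subst h; exact haeq ▸ hmx
    · exact haeq ▸ hmW a h
  have himgcard : ((insert x W).image m).card = W.card + 1 := by
    rw [Finset.card_image_of_injective _ hminj, Finset.card_insert_of_notMem hxW]
  have hWd : W.card + 1 ≤ d := by
    rw [← himgcard]; exact Finset.card_le_card himgsub
  have hdisj : Disjoint (insert x Nx) W := by
    rw [Finset.disjoint_left]
    intro a ha haW
    rcases Finset.mem_insert.1 ha with h | h
    · exact (hWfacts a haW).1 h
    · exact (hWfacts a haW).2.1 h
  have hCcard : C.card = 1 + d + W.card := by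
    rw [hCdef, Finset.card_union_of_disjoint hdisj, Finset.card_insert_of_notMem hxNx]
    omega
  have hCmem : ∀ v, v ∈ C ↔ (v = x ∨ v ∈ Nx ∨ v ∈ W) := by
    intro v
    simp only [hCdef, Finset.mem_union, Finset.mem_insert]
    tauto
  have hxC : x ∈ C := (hCmem x).2 (Or.inl rfl)
  have hNxC : ∀ v ∈ Nx, v ∈ C := fun v hv => (hCmem v).2 (Or.inr (Or.inl hv))
  have hWC : ∀ v ∈ W, v ∈ C := fun v hv => (hCmem v).2 (Or.inr (Or.inr hv))
  by_cases hcase : W.card + 2 ≤ d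
  · -- plenty of room: direct reduction
    apply reduceContra G hev hdom (insert x (W.image m)) C ?_ ?_ ?_
    · intro c hc
      rcases (hCmem c).1 hc with h | h | h
      · exact Or.inl (by rw [h]; exact Finset.mem_insert_self x _)
      · exact Or.inr ⟨x, Finset.mem_insert_self x _,
          G.adj_symm ((SimpleGraph.mem_neighborFinset G x c).1 h)⟩
      · exact Or.inr ⟨m c, Finset.mem_insert.2 (Or.inr (Finset.mem_image_of_mem m h)),
          hmadj c⟩
    · intro v hv
      have hvx : v ≠ x := fun h => hv (h ▸ hxC)
      have hvNx : v ∉ Nx := fun h => hv (hNxC v h)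
      have hvW : v ∉ W := fun h => hv (hWC v h)
      have hnsub : ¬ G.neighborFinset v ⊆ Nx := by
        intro hsub
        exact hvW (by simp [hWdef, hvx, hvNx, hsub])
      obtain ⟨u, huv, huNx⟩ := Finset.not_subset.1 hnsub
      have hadj : G.Adj v u := (SimpleGraph.mem_neighborFinset G v u).1 huv
      refine ⟨u, ?_, hadj⟩
      intro huC
      rcases (hCmem u).1 huC with h | h | h
      · subst h
        exact hvNx ((SimpleGraph.mem_neighborFinset G u v).2 (G.adj_symm hadj))
      · exact huNx h
      · exact hvNx ((hWfacts u h).2.2 ((SimpleGraph.mem_neighborFinset G u v).2 (G.adj_symm hadj)))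
    · have h0 := Finset.card_insert_le x (W.image m)
      have h2 : (W.image m).card ≤ W.card := Finset.card_image_le
      omega
  · -- tight case : W.card + 1 = d
    have hW1 : W.card + 1 = d := by omega
    have himg : (insert x W).image m = Nx :=
      Finset.eq_of_subset_of_card_le himgsub (by omega)
    have hmNx : ∀ y ∈ Nx, m y ∈ insert x W := by
      intro y hyNx
      rw [← himg] at hyNx
      obtain ⟨u, hu, hueq⟩ := Finset.mem_image.1 hyNx
      have : m y = u := by rw [← hueq, hminv]
      exact this ▸ hu
    have hmC : ∀ v ∈ C, m v ∈ C := by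
      intro v hv
      rcases (hCmem v).1 hv with h | h | h
      · exact h ▸ hNxC _ hmx
      · rcases Finset.mem_insert.1 (hmNx v h) with h2 | h2
        · exact h2 ▸ hxC
        · exact hWC _ h2
      · exact hNxC _ (hmW v h)
    have hmCout : ∀ v, v ∉ C → m v ∉ C := by
      intro v hv hmvC
      exact hv (by rw [← hminv v]; exact hmC _ hmvC)
    set y₀ := m x with hy₀
    have hy₀Nx : y₀ ∈ Nx := hmx
    have hmy₀ : m y₀ = x := by rw [hy₀, hminv]
    by_cases hCuniv : C = Finset.univ
    · -- C is everything; n = 2d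
      have hn2d : Fintype.card V = 2 * d := by
        rw [← Finset.card_univ, ← hCuniv, hCcard]; omega
      have hd3 : 3 ≤ d := by omega
      have hy0deg : 2 ≤ (G.neighborFinset y₀).card := hy y₀ hy₀Nx
      have hxy0 : x ∈ G.neighborFinset y₀ := by
        rw [SimpleGraph.mem_neighborFinset]; exact G.adj_symm (hmadj x)
      obtain ⟨u, huN, hux⟩ := Finset.exists_mem_ne (s := G.neighborFinset y₀) (by omega) x
      have huadj : G.Adj y₀ u := (SimpleGraph.mem_neighborFinset G y₀ u).1 huN
      have huy₀ : u ≠ y₀ := fun h => G.ne_of_adj huadj h.symm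
      have huC : u ∈ C := hCuniv ▸ Finset.mem_univ u
      rcases (hCmem u).1 huC with h | h | h
      · exact hux h
      · -- u ∈ Nx : use S = Nx.erase y₀, C = univ
        apply reduceContra G hev hdom (Nx.erase y₀) Finset.univ ?_ ?_ ?_
        · intro c _
          have hcC : c ∈ C := hCuniv ▸ Finset.mem_univ c
          rcases (hCmem c).1 hcC with h2 | h2 | h2
          · obtain ⟨y₂, hy₂⟩ := Finset.card_pos.1
              (by rw [Finset.card_erase_of_mem hy₀Nx]; omega : 0 < (Nx.erase y₀).card)
            refine Or.inr ⟨y₂, hy₂, ?_⟩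
            rw [h2]
            exact (SimpleGraph.mem_neighborFinset G x y₂).1 (Finset.mem_of_mem_erase hy₂)
          · by_cases h3 : c = y₀
            · exact Or.inr ⟨u, Finset.mem_erase.2 ⟨huy₀, h⟩, h3 ▸ huadj⟩
            · exact Or.inl (Finset.mem_erase.2 ⟨h3, h2⟩)
          · refine Or.inr ⟨m c, Finset.mem_erase.2 ⟨?_, hmW c h2⟩, hmadj c⟩
            intro h4
            have : c = x := by
              have := congrArg m h4
              rwa [hminv, hmy₀] at this
            exact (hWfacts c h2).1 this
        · intro v hv
          exact absurd (Finset.mem_univ v) hv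
        · rw [Finset.card_erase_of_mem hy₀Nx, Finset.card_univ]
          omega
      · -- u ∈ W
        set w₁ := u with hw₁
        have hmw₁Nx : m w₁ ∈ Nx := hmW w₁ h
        have hmw₁y₀ : m w₁ ≠ y₀ := by
          intro h4
          have : w₁ = x := by
            have := congrArg m h4
            rwa [hminv, hmy₀] at this
          exact (hWfacts w₁ h).1 this
        apply reduceContra G hev hdom
          (insert w₁ ((Nx.erase y₀).erase (m w₁))) Finset.univ ?_ ?_ ?_
        · intro c _
          have hcC : c ∈ C := hCuniv ▸ Finset.mem_univ c
          rcases (hCmem c).1 hcC with h2 | h2 | h2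
          · obtain ⟨y₃, hy₃⟩ := Finset.card_pos.1
              (by rw [Finset.card_erase_of_mem (Finset.mem_erase.2 ⟨hmw₁y₀, hmw₁Nx⟩),
                  Finset.card_erase_of_mem hy₀Nx]; omega :
                0 < ((Nx.erase y₀).erase (m w₁)).card)
            refine Or.inr ⟨y₃, Finset.mem_insert.2 (Or.inr hy₃), ?_⟩
            rw [h2]
            exact (SimpleGraph.mem_neighborFinset G x y₃).1
              (Finset.mem_of_mem_erase (Finset.mem_of_mem_erase hy₃))
          · by_cases h3 : c = y₀
            · exact Or.inr ⟨w₁, Finset.mem_insert_self _ _, h3 ▸ huadj⟩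
            · by_cases h4 : c = m w₁
              · exact Or.inr ⟨w₁, Finset.mem_insert_self _ _, h4 ▸ G.adj_symm (hmadj w₁)⟩
              · exact Or.inl (Finset.mem_insert.2 (Or.inr
                  (Finset.mem_erase.2 ⟨h4, Finset.mem_erase.2 ⟨h3, h2⟩⟩)))
          · by_cases h3 : c = w₁
            · exact Or.inl (h3 ▸ Finset.mem_insert_self _ _)
            · refine Or.inr ⟨m c, Finset.mem_insert.2 (Or.inr
                (Finset.mem_erase.2 ⟨?_, Finset.mem_erase.2 ⟨?_, hmW c h2⟩⟩)), hmadj c⟩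
              · intro h4; exact h3 (hminj h4)
              · intro h4
                have : c = x := by
                  have := congrArg m h4
                  rwa [hminv, hmy₀] at this
                exact (hWfacts c h2).1 this
        · intro v hv
          exact absurd (Finset.mem_univ v) hv
        · have hw₁Nx : w₁ ∉ (Nx.erase y₀).erase (m w₁) := by
            intro h4
            exact (hWfacts w₁ h).2.1 (Finset.mem_of_mem_erase (Finset.mem_of_mem_erase h4))
          rw [Finset.card_insert_of_notMem hw₁Nx,
            Finset.card_erase_of_mem (Finset.mem_erase.2 ⟨hmw₁y₀, hmw₁Nx⟩),
            Finset.card_erase_of_mem hy₀Nx, Finset.card_univ]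
          omega
    · -- C ≠ univ : there is an edge leaving C
      have hz₀ : ∃ z₀, z₀ ∉ C := by
        by_contra hcon
        push_neg at hcon
        exact hCuniv (Finset.eq_univ_iff_forall.2 hcon)
      obtain ⟨z₀, hz₀C⟩ := hz₀
      obtain ⟨p⟩ := hconn.preconnected x z₀
      obtain ⟨yy, hyyC, z, hzC, hadjyz⟩ := walk_cross G p hxC hz₀C
      have hyyNx : yy ∈ Nx := by
        rcases (hCmem yy).1 hyyC with h | h | h
        · exfalso
          apply hzC
          apply hNxC
          rw [SimpleGraph.mem_neighborFinset]
          exact h ▸ hadjyz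
        · exact h
        · exfalso
          apply hzC
          apply hNxC
          exact (hWfacts yy h).2.2 ((SimpleGraph.mem_neighborFinset G yy z).2 hadjyz)
      -- the finishing move
      have finishPair : ∀ z' : V, z' ∉ C → ∀ S : Finset V, S.card ≤ d → z' ∈ S →
          (∀ v ∈ C, v ∈ S ∨ ∃ s ∈ S, G.Adj v s) → False := by
        intro z' hz'C S hScard hz'S hcovS
        set p' := m z' with hp'
        have hp'C : p' ∉ C := hmCout z' hz'C
        have hp'z : p' ≠ z' := fun h => G.ne_of_adj (hmadj z') h.symm
        apply reduceContra G hev hdom S (insert z' (insert p' C)) ?_ ?_ ?_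
        · intro c hc
          rcases Finset.mem_insert.1 hc with h | h
          · exact Or.inl (h ▸ hz'S)
          · rcases Finset.mem_insert.1 h with h2 | h2
            · exact Or.inr ⟨z', hz'S, h2 ▸ G.adj_symm (hmadj z')⟩
            · exact hcovS c h2
        · intro v hv
          by_contra hcon
          push_neg at hcon
          have hvC : v ∉ C := fun h =>
            hv (Finset.mem_insert.2 (Or.inr (Finset.mem_insert.2 (Or.inr h))))
          have hmvmem : m v ∈ insert z' (insert p' C) := by
            by_contra h2
            exact hcon (m v) h2 (hmadj v)
          rcases Finset.mem_insert.1 hmvmem with h2 | h2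
          · -- m v = z' so v = p'
            have : v = p' := by
              rw [hp', ← h2, hminv]
            exact hv (this ▸ Finset.mem_insert.2 (Or.inr (Finset.mem_insert_self _ _)))
          · rcases Finset.mem_insert.1 h2 with h3 | h3
            · -- m v = p' = m z' so v = z'
              have : v = z' := hminj (h3.trans rfl)
              exact hv (this ▸ Finset.mem_insert_self _ _)
            · exact (hmCout v hvC) h3
        · have hCc : C.card = 2 * d := by omega
          have hc1 : (insert p' C).card = 2 * d + 1 := by
            rw [Finset.card_insert_of_notMem hp'C]; omega
          have hz'p' : z' ∉ insert p' C := by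
            intro h2
            rcases Finset.mem_insert.1 h2 with h3 | h3
            · exact hp'z h3.symm
            · exact hz'C h3
          rw [Finset.card_insert_of_notMem hz'p']
          omega
      set w₀ := m yy with hw₀
      have hzNx : z ∉ Nx := fun h => hzC (hNxC z h)
      have hzS : ∀ T : Finset V, T ⊆ Nx → z ∉ T := fun T hT h => hzNx (hT h)
      by_cases hyy0 : yy = y₀
      · -- yy = y₀ : S = insert z (Nx.erase y₀)
        apply finishPair z hzC (insert z (Nx.erase y₀)) ?_ (Finset.mem_insert_self _ _) ?_
        · rw [Finset.card_insert_of_notMem (hzS _ (Finset.erase_subset _ _)),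
            Finset.card_erase_of_mem hy₀Nx]
          omega
        · intro v hv
          rcases (hCmem v).1 hv with h | h | h
          · obtain ⟨y₂, hy₂⟩ := Finset.card_pos.1
              (by rw [Finset.card_erase_of_mem hy₀Nx]; omega : 0 < (Nx.erase y₀).card)
            refine Or.inr ⟨y₂, Finset.mem_insert.2 (Or.inr hy₂), ?_⟩
            rw [h]
            exact (SimpleGraph.mem_neighborFinset G x y₂).1 (Finset.mem_of_mem_erase hy₂)
          · by_cases h3 : v = y₀
            · exact Or.inr ⟨z, Finset.mem_insert_self _ _, by
                rw [h3, ← hyy0]; exact hadjyz⟩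
            · exact Or.inl (Finset.mem_insert.2 (Or.inr (Finset.mem_erase.2 ⟨h3, h⟩)))
          · refine Or.inr ⟨m v, Finset.mem_insert.2 (Or.inr
              (Finset.mem_erase.2 ⟨?_, hmW v h⟩)), hmadj v⟩
            intro h4
            have : v = x := by
              have := congrArg m h4
              rwa [hminv, hmy₀] at this
            exact (hWfacts v h).1 this
      · have hw₀W : w₀ ∈ W := by
          rcases Finset.mem_insert.1 (hmNx yy hyyNx) with h | h
          · exfalso
            apply hyy0
            have := congrArg m h
            rw [hminv] at this
            rw [this, hy₀]
          · exact h
        by_cases hB4a : ∃ y'' ∈ Nx.erase yy, G.Adj w₀ y''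
        · obtain ⟨y'', hy''mem, hy''adj⟩ := hB4a
          apply finishPair z hzC (insert z (Nx.erase yy)) ?_ (Finset.mem_insert_self _ _) ?_
          · rw [Finset.card_insert_of_notMem (hzS _ (Finset.erase_subset _ _)),
              Finset.card_erase_of_mem hyyNx]
            omega
          · intro v hv
            rcases (hCmem v).1 hv with h | h | h
            · obtain ⟨y₂, hy₂⟩ := Finset.card_pos.1
                (by rw [Finset.card_erase_of_mem hyyNx]; omega : 0 < (Nx.erase yy).card)
              refine Or.inr ⟨y₂, Finset.mem_insert.2 (Or.inr hy₂), ?_⟩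
              rw [h]
              exact (SimpleGraph.mem_neighborFinset G x y₂).1 (Finset.mem_of_mem_erase hy₂)
            · by_cases h3 : v = yy
              · exact Or.inr ⟨z, Finset.mem_insert_self _ _, h3 ▸ hadjyz⟩
              · exact Or.inl (Finset.mem_insert.2 (Or.inr (Finset.mem_erase.2 ⟨h3, h⟩)))
            · by_cases h3 : v = w₀
              · exact Or.inr ⟨y'', Finset.mem_insert.2 (Or.inr hy''mem), h3 ▸ hy''adj⟩
              · refine Or.inr ⟨m v, Finset.mem_insert.2 (Or.inr
                  (Finset.mem_erase.2 ⟨?_, hmW v h⟩)), hmadj v⟩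
                intro h4
                apply h3
                have := congrArg m h4
                rwa [hminv, ← hw₀] at this
        · push_neg at hB4a
          -- w₀ is pendant at yy; look at second neighbour of y₀
          have hy0deg : 2 ≤ (G.neighborFinset y₀).card := hy y₀ hy₀Nx
          obtain ⟨u, huN, hux⟩ := Finset.exists_mem_ne (s := G.neighborFinset y₀) (by omega) x
          have huadj : G.Adj y₀ u := (SimpleGraph.mem_neighborFinset G y₀ u).1 huN
          have huy₀ : u ≠ y₀ := fun h4 => G.ne_of_adj huadj h4.symm
          by_cases huC : u ∈ C
          · rcases (hCmem u).1 huC with h | h | h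
            · exact hux h
            · -- u ∈ Nx : S = insert z (Nx.erase y₀); w₀ covered by yy
              apply finishPair z hzC (insert z (Nx.erase y₀)) ?_
                (Finset.mem_insert_self _ _) ?_
              · rw [Finset.card_insert_of_notMem (hzS _ (Finset.erase_subset _ _)),
                  Finset.card_erase_of_mem hy₀Nx]
                omega
              · intro v hv
                rcases (hCmem v).1 hv with h2 | h2 | h2
                · obtain ⟨y₂, hy₂⟩ := Finset.card_pos.1
                    (by rw [Finset.card_erase_of_mem hy₀Nx]; omega :
                      0 < (Nx.erase y₀).card)
                  refine Or.inr ⟨y₂, Finset.mem_insert.2 (Or.inr hy₂), ?_⟩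
                  rw [h2]
                  exact (SimpleGraph.mem_neighborFinset G x y₂).1
                    (Finset.mem_of_mem_erase hy₂)
                · by_cases h3 : v = y₀
                  · exact Or.inr ⟨u, Finset.mem_insert.2 (Or.inr
                      (Finset.mem_erase.2 ⟨huy₀, h⟩)), h3 ▸ huadj⟩
                  · exact Or.inl (Finset.mem_insert.2 (Or.inr
                      (Finset.mem_erase.2 ⟨h3, h2⟩)))
                · refine Or.inr ⟨m v, Finset.mem_insert.2 (Or.inr
                    (Finset.mem_erase.2 ⟨?_, hmW v h2⟩)), hmadj v⟩
                  intro h4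
                  have : v = x := by
                    have := congrArg m h4
                    rwa [hminv, hmy₀] at this
                  exact (hWfacts v h2).1 this
            · -- u ∈ W : call it w₁
              set w₁ := u with hw₁
              have hmw₁Nx : m w₁ ∈ Nx := hmW w₁ h
              have hmw₁y₀ : m w₁ ≠ y₀ := by
                intro h4
                have : w₁ = x := by
                  have := congrArg m h4
                  rwa [hminv, hmy₀] at this
                exact (hWfacts w₁ h).1 this
              have hw₁w₀ : w₁ ≠ w₀ := by
                intro h4
                apply hB4a y₀ (Finset.mem_erase.2 ⟨fun h5 => hyy0 h5.symm, hy₀Nx⟩)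
                rw [← h4]
                exact G.adj_symm huadj
              have hyymw₁ : yy ≠ m w₁ := by
                intro h4
                apply hw₁w₀
                have := congrArg m h4
                rw [hminv] at this
                rw [← this, hw₀]
              have hd3 : 3 ≤ d := by
                have : ({w₀, w₁} : Finset V) ⊆ W := by
                  intro a ha
                  rcases Finset.mem_insert.1 ha with h5 | h5
                  · exact h5 ▸ hw₀W
                  · exact (Finset.mem_singleton.1 h5) ▸ h
                have h6 : ({w₀, w₁} : Finset V).card = 2 := by
                  rw [Finset.card_insert_of_notMem (by
                    simp only [Finset.mem_singleton]
                    exact fun h7 => hw₁w₀ h7.symm), Finset.card_singleton]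
                have := Finset.card_le_card this
                omega
              apply finishPair z hzC
                (insert z (insert w₁ ((Nx.erase y₀).erase (m w₁)))) ?_
                (Finset.mem_insert_self _ _) ?_
              · have hw₁mem : w₁ ∉ (Nx.erase y₀).erase (m w₁) := fun h4 =>
                  (hWfacts w₁ h).2.1 (Finset.mem_of_mem_erase (Finset.mem_of_mem_erase h4))
                have hzmem : z ∉ insert w₁ ((Nx.erase y₀).erase (m w₁)) := by
                  intro h4
                  rcases Finset.mem_insert.1 h4 with h5 | h5
                  · exact hzC (h5 ▸ hWC w₁ h)
                  · exact hzNx (Finset.mem_of_mem_erase (Finset.mem_of_mem_erase h5))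
                rw [Finset.card_insert_of_notMem hzmem,
                  Finset.card_insert_of_notMem hw₁mem,
                  Finset.card_erase_of_mem (Finset.mem_erase.2 ⟨hmw₁y₀, hmw₁Nx⟩),
                  Finset.card_erase_of_mem hy₀Nx]
                omega
              · intro v hv
                rcases (hCmem v).1 hv with h2 | h2 | h2
                · obtain ⟨y₃, hy₃⟩ := Finset.card_pos.1
                    (by rw [Finset.card_erase_of_mem (Finset.mem_erase.2 ⟨hmw₁y₀, hmw₁Nx⟩),
                        Finset.card_erase_of_mem hy₀Nx]; omega :
                      0 < ((Nx.erase y₀).erase (m w₁)).card)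
                  refine Or.inr ⟨y₃, Finset.mem_insert.2 (Or.inr
                    (Finset.mem_insert.2 (Or.inr hy₃))), ?_⟩
                  rw [h2]
                  exact (SimpleGraph.mem_neighborFinset G x y₃).1
                    (Finset.mem_of_mem_erase (Finset.mem_of_mem_erase hy₃))
                · by_cases h3 : v = y₀
                  · exact Or.inr ⟨w₁, Finset.mem_insert.2 (Or.inr
                      (Finset.mem_insert_self _ _)), h3 ▸ huadj⟩
                  · by_cases h4 : v = m w₁
                    · exact Or.inr ⟨w₁, Finset.mem_insert.2 (Or.inr
                        (Finset.mem_insert_self _ _)), h4 ▸ G.adj_symm (hmadj w₁)⟩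
                    · exact Or.inl (Finset.mem_insert.2 (Or.inr (Finset.mem_insert.2
                        (Or.inr (Finset.mem_erase.2 ⟨h4, Finset.mem_erase.2 ⟨h3, h2⟩⟩)))))
                · by_cases h3 : v = w₁
                  · exact Or.inl (Finset.mem_insert.2 (Or.inr
                      (h3 ▸ Finset.mem_insert_self _ _)))
                  · refine Or.inr ⟨m v, Finset.mem_insert.2 (Or.inr (Finset.mem_insert.2
                      (Or.inr (Finset.mem_erase.2 ⟨?_, Finset.mem_erase.2
                        ⟨?_, hmW v h2⟩⟩)))), hmadj v⟩
                    · exact fun h4 => h3 (hminj h4)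
                    · intro h4
                      have : v = x := by
                        have := congrArg m h4
                        rwa [hminv, hmy₀] at this
                      exact (hWfacts v h2).1 this
          · -- u ∉ C : use (y₀, u) as the crossing pair
            apply finishPair u huC (insert u (Nx.erase y₀)) ?_
              (Finset.mem_insert_self _ _) ?_
            · have humem : u ∉ Nx.erase y₀ := fun h4 =>
                huC (hNxC u (Finset.mem_of_mem_erase h4))
              rw [Finset.card_insert_of_notMem humem, Finset.card_erase_of_mem hy₀Nx]
              omega
            · intro v hv
              rcases (hCmem v).1 hv with h2 | h2 | h2
              · obtain ⟨y₂, hy₂⟩ := Finset.card_pos.1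
                  (by rw [Finset.card_erase_of_mem hy₀Nx]; omega :
                    0 < (Nx.erase y₀).card)
                refine Or.inr ⟨y₂, Finset.mem_insert.2 (Or.inr hy₂), ?_⟩
                rw [h2]
                exact (SimpleGraph.mem_neighborFinset G x y₂).1
                  (Finset.mem_of_mem_erase hy₂)
              · by_cases h3 : v = y₀
                · exact Or.inr ⟨u, Finset.mem_insert_self _ _, h3 ▸ huadj⟩
                · exact Or.inl (Finset.mem_insert.2 (Or.inr
                    (Finset.mem_erase.2 ⟨h3, h2⟩)))
              · refine Or.inr ⟨m v, Finset.mem_insert.2 (Or.inr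
                  (Finset.mem_erase.2 ⟨?_, hmW v h2⟩)), hmadj v⟩
                intro h4
                have : v = x := by
                  have := congrArg m h4
                  rwa [hminv, hmy₀] at this
                exact (hWfacts v h2).1 this


end Infra

section Perm

variable {n : ℕ}

instance permGraphDec (π : Equiv.Perm (Fin n)) : DecidableRel (permGraph π).Adj := fun i j =>
  decidable_of_iff ((i < j ∧ π.symm j < π.symm i) ∨ (j < i ∧ π.symm i < π.symm j)) Iff.rfl

lemma permGraph_adj (π : Equiv.Perm (Fin n)) (i j : Fin n) : (permGraph π).Adj i j ↔
    (i < j ∧ π.symm j < π.symm i) ∨ (j < i ∧ π.symm i < π.symm j) := Iff.rfl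

lemma deg_eq_card (G : SimpleGraph (Fin n)) [DecidableRel G.Adj] (v : Fin n) :
    deg G v = (G.neighborFinset v).card := by
  rw [deg, Set.ncard_eq_toFinset_card']
  rfl

lemma partA (hn : 6 ≤ n) (hev : Even n) (π : Equiv.Perm (Fin n))
    (hconn : (permGraph π).Connected)
    (hdom : domNumber (permGraph π) = n / 2) :
    Xor' (deg (permGraph π) ⟨0, (by norm_num : 0 < 6).trans_le hn⟩ = 1) (deg (permGraph π) ⟨1, (by norm_num : 1 < 6).trans_le hn⟩ = 1) := by
  classical
  set G := permGraph π with hG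
  set x0 : Fin n := ⟨0, (by norm_num : 0 < 6).trans_le hn⟩ with hx0
  set x1 : Fin n := ⟨1, (by norm_num : 1 < 6).trans_le hn⟩ with hx1
  have hx01 : x0 ≠ x1 := by
    intro h
    have := congrArg Fin.val h
    simp [hx0, hx1] at this
  have hcardV : Fintype.card (Fin n) = n := Fintype.card_fin n
  have hev' : Even (Fintype.card (Fin n)) := by rwa [hcardV]
  have hdom' : domNumber G = Fintype.card (Fin n) / 2 := by rwa [hcardV]
  have hn' : 6 ≤ Fintype.card (Fin n) := by omega
  have hniso : ∀ v : Fin n, ∃ u, G.Adj v u := noiso G hconn (by omega)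
  have hnotboth : ¬ (deg G x0 = 1 ∧ deg G x1 = 1) := by
    rintro ⟨h0, h1⟩
    rw [deg_eq_card] at h0 h1
    obtain ⟨t0, ht0⟩ := Finset.card_eq_one.1 h0
    obtain ⟨t1, ht1⟩ := Finset.card_eq_one.1 h1
    have hadj0t0 : G.Adj x0 t0 := by
      rw [← SimpleGraph.mem_neighborFinset, ht0]
      exact Finset.mem_singleton_self t0
    have hadj1t1 : G.Adj x1 t1 := by
      rw [← SimpleGraph.mem_neighborFinset, ht1]
      exact Finset.mem_singleton_self t1
    by_cases hadj01 : G.Adj x0 x1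
    · -- {x0, x1} is a closed component: contradicts connectivity
      have hN0 : G.neighborFinset x0 = {x1} := by
        have : x1 ∈ G.neighborFinset x0 := (SimpleGraph.mem_neighborFinset G x0 x1).2 hadj01
        rw [ht0] at this
        rw [ht0, Finset.mem_singleton.1 this]
      have hN1 : G.neighborFinset x1 = {x0} := by
        have : x0 ∈ G.neighborFinset x1 := (SimpleGraph.mem_neighborFinset G x1 x0).2
          (G.adj_symm hadj01)
        rw [ht1] at this
        rw [ht1, Finset.mem_singleton.1 this]
      set A : Set (Fin n) := {x0, x1} with hA
      have hAcl : ∀ u ∈ A, ∀ v, G.Adj u v → v ∈ A := by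
        intro u hu v hadj
        rcases hu with h | h
        · have : v ∈ G.neighborFinset x0 := by
            rw [SimpleGraph.mem_neighborFinset]; exact h ▸ hadj
          rw [hN0, Finset.mem_singleton] at this
          exact Or.inr this
        · have : v ∈ G.neighborFinset x1 := by
            rw [SimpleGraph.mem_neighborFinset]
            exact (Set.mem_singleton_iff.1 h) ▸ hadj
          rw [hN1, Finset.mem_singleton] at this
          exact Or.inl this
      obtain ⟨p⟩ := hconn.preconnected x0 ⟨2, by omega⟩
      have hmem := walk_confined G hAcl p (Or.inl rfl)
      rcases hmem with h | h
      · have := congrArg Fin.val h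
        simp [hx0] at this
      · have := congrArg Fin.val h
        simp [hx1] at this
    · -- x0 and x1 are pendant at a common vertex p0 = π 0
      set p0 : Fin n := π ⟨0, (by norm_num : 0 < 6).trans_le hn⟩ with hp0
      have hσp0 : π.symm p0 = ⟨0, (by norm_num : 0 < 6).trans_le hn⟩ := Equiv.symm_apply_apply π _
      -- x0's neighbour is p0
      have hform0 : x0 < t0 ∧ π.symm t0 < π.symm x0 := by
        rcases (permGraph_adj π x0 t0).1 hadj0t0 with h | h
        · exact h
        · exact absurd h.1 (by simp [Fin.lt_def, hx0])
      have hσx0pos : 0 < (π.symm x0).val := by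
        have := hform0.2
        rw [Fin.lt_def] at this
        omega
      have hp0x0 : p0 ≠ x0 := by
        intro h
        rw [← h, hσp0] at hσx0pos
        simp at hσx0pos
      have hadj0p0 : G.Adj x0 p0 := by
        rw [hG, permGraph_adj]
        left
        refine ⟨?_, ?_⟩
        · rw [Fin.lt_def]
          simp only [hx0]
          have : p0.val ≠ 0 := fun h => hp0x0 (Fin.ext (by simp [hx0, h]))
          omega
        · rw [hσp0, Fin.lt_def]
          exact hσx0pos
      have ht0p0 : t0 = p0 := by
        have : p0 ∈ G.neighborFinset x0 := (SimpleGraph.mem_neighborFinset G x0 p0).2 hadj0p0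
        rw [ht0, Finset.mem_singleton] at this
        exact this.symm
      -- x1's neighbour is p0 as well
      have hform1 : x1 < t1 ∧ π.symm t1 < π.symm x1 := by
        rcases (permGraph_adj π x1 t1).1 hadj1t1 with h | h
        · exact h
        · exfalso
          have ht1x0 : t1 = x0 := by
            have := h.1
            rw [Fin.lt_def] at this
            simp only [hx1] at this
            exact Fin.ext (by simp [hx0]; omega)
          rw [ht1x0] at hadj1t1
          exact hadj01 (G.adj_symm hadj1t1)
      have hσx1pos : 0 < (π.symm x1).val := by
        have := hform1.2
        rw [Fin.lt_def] at this
        omega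
      have hp0x1 : p0 ≠ x1 := by
        intro h
        rw [← h, hσp0] at hσx1pos
        simp at hσx1pos
      have hadj1p0 : G.Adj x1 p0 := by
        rw [hG, permGraph_adj]
        left
        refine ⟨?_, ?_⟩
        · rw [Fin.lt_def]
          simp only [hx1]
          have h1 : p0.val ≠ 0 := fun h => hp0x0 (Fin.ext (by simp [hx0, h]))
          have h2 : p0.val ≠ 1 := fun h => hp0x1 (Fin.ext (by simp [hx1, h]))
          omega
        · rw [hσp0, Fin.lt_def]
          exact hσx1pos
      have ht1p0 : t1 = p0 := by
        have : p0 ∈ G.neighborFinset x1 := (SimpleGraph.mem_neighborFinset G x1 p0).2 hadj1p0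
        rw [ht1, Finset.mem_singleton] at this
        exact this.symm
      -- SUPPORT: two pendants at p0
      apply reduceContra G hev' hdom' {p0}
        (insert p0 (Finset.univ.filter (fun v => G.neighborFinset v ⊆ {p0}))) ?_ ?_ ?_
      · intro c hc
        rcases Finset.mem_insert.1 hc with h | h
        · exact Or.inl (h ▸ Finset.mem_singleton_self p0)
        · have hsub : G.neighborFinset c ⊆ {p0} := (Finset.mem_filter.1 h).2
          obtain ⟨u, hu⟩ := hniso c
          have humem : u ∈ G.neighborFinset c := (SimpleGraph.mem_neighborFinset G c u).2 hu
          have : u = p0 := Finset.mem_singleton.1 (hsub humem)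
          exact Or.inr ⟨p0, Finset.mem_singleton_self p0, this ▸ hu⟩
      · intro v hv
        have hvp0 : v ≠ p0 := fun h => hv (h ▸ Finset.mem_insert_self _ _)
        have hnsub : ¬ G.neighborFinset v ⊆ {p0} := by
          intro hsub
          exact hv (Finset.mem_insert.2 (Or.inr (Finset.mem_filter.2
            ⟨Finset.mem_univ v, hsub⟩)))
        obtain ⟨u, huv, hup0⟩ := Finset.not_subset.1 hnsub
        rw [Finset.mem_singleton] at hup0
        refine ⟨u, ?_, (SimpleGraph.mem_neighborFinset G v u).1 huv⟩
        intro huC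
        rcases Finset.mem_insert.1 huC with h | h
        · exact hup0 h
        · have hsub : G.neighborFinset u ⊆ {p0} := (Finset.mem_filter.1 h).2
          have : v ∈ G.neighborFinset u := (SimpleGraph.mem_neighborFinset G u v).2
            (G.adj_symm ((SimpleGraph.mem_neighborFinset G v u).1 huv))
          exact hvp0 (Finset.mem_singleton.1 (hsub this))
      · have hsub3 : ({p0, x0, x1} : Finset (Fin n)) ⊆
            insert p0 (Finset.univ.filter (fun v => G.neighborFinset v ⊆ {p0})) := by
          intro a ha
          rcases Finset.mem_insert.1 ha with h | h
          · exact h ▸ Finset.mem_insert_self _ _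
          · rcases Finset.mem_insert.1 h with h2 | h2
            · refine Finset.mem_insert.2 (Or.inr (Finset.mem_filter.2
                ⟨Finset.mem_univ _, ?_⟩))
              rw [h2, ht0, ht0p0]
            · rw [Finset.mem_singleton.1 h2]
              refine Finset.mem_insert.2 (Or.inr (Finset.mem_filter.2
                ⟨Finset.mem_univ _, ?_⟩))
              rw [ht1, ht1p0]
        have hcard3 : ({p0, x0, x1} : Finset (Fin n)).card = 3 := by
          rw [Finset.card_insert_of_notMem (by
            simp only [Finset.mem_insert, Finset.mem_singleton]
            push_neg
            exact ⟨hp0x0, hp0x1⟩), Finset.card_insert_of_notMem (by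
            simp only [Finset.mem_singleton]
            exact hx01), Finset.card_singleton]
        have := Finset.card_le_card hsub3
        have hScard : ({p0} : Finset (Fin n)).card = 1 := Finset.card_singleton p0
        omega
  have hnotnone : ¬ (deg G x0 ≠ 1 ∧ deg G x1 ≠ 1) := by
    rintro ⟨h0, h1⟩
    rw [deg_eq_card] at h0 h1
    have hd0 : 2 ≤ (G.neighborFinset x0).card := by
      obtain ⟨u, hu⟩ := hniso x0
      have : 0 < (G.neighborFinset x0).card := Finset.card_pos.2
        ⟨u, (SimpleGraph.mem_neighborFinset G x0 u).2 hu⟩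
      omega
    have hd1 : 2 ≤ (G.neighborFinset x1).card := by
      obtain ⟨u, hu⟩ := hniso x1
      have : 0 < (G.neighborFinset x1).card := Finset.card_pos.2
        ⟨u, (SimpleGraph.mem_neighborFinset G x1 u).2 hu⟩
      omega
    have hσne : π.symm x0 ≠ π.symm x1 := fun h => hx01 (π.symm.injective h)
    rcases lt_or_gt_of_ne hσne with hσ | hσ
    · -- σ x0 < σ x1 : apply L1 at x0
      apply L1 G hconn hn' hev' hdom' x0 hd0
      intro y hyN
      have hadj : G.Adj x0 y := (SimpleGraph.mem_neighborFinset G x0 y).1 hyN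
      have hform : x0 < y ∧ π.symm y < π.symm x0 := by
        rcases (permGraph_adj π x0 y).1 hadj with h | h
        · exact h
        · exact absurd h.1 (by simp [Fin.lt_def, hx0])
      have hyx1 : y ≠ x1 := by
        intro h
        rw [h] at hform
        exact absurd hσ (not_lt.2 (le_of_lt hform.2))
      have hx1y : x1 < y := by
        rw [Fin.lt_def]
        simp only [hx1]
        have h1 : y.val ≠ 0 := by
          have := hform.1
          rw [Fin.lt_def] at this
          simp only [hx0] at this
          omega
        have h2 : y.val ≠ 1 := fun h => hyx1 (Fin.ext (by simp [hx1, h]))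
        omega
      have hadj1 : G.Adj y x1 := by
        rw [hG, permGraph_adj]
        exact Or.inr ⟨hx1y, lt_trans hform.2 hσ⟩
      exact Finset.one_lt_card.2 ⟨x0, (SimpleGraph.mem_neighborFinset G y x0).2 (G.adj_symm hadj),
        x1, (SimpleGraph.mem_neighborFinset G y x1).2 hadj1, hx01⟩
    · -- σ x1 < σ x0 : apply L1 at x1
      apply L1 G hconn hn' hev' hdom' x1 hd1
      intro y hyN
      have hadj : G.Adj x1 y := (SimpleGraph.mem_neighborFinset G x1 y).1 hyN
      rcases (permGraph_adj π x1 y).1 hadj with h | h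
      · -- y > x1
        have hx0y : x0 < y := by
          rw [Fin.lt_def]
          simp only [hx0]
          have := h.1
          rw [Fin.lt_def] at this
          simp only [hx1] at this
          omega
        have hadj0 : G.Adj y x0 := by
          rw [hG, permGraph_adj]
          exact Or.inr ⟨hx0y, lt_trans h.2 hσ⟩
        exact Finset.one_lt_card.2 ⟨x0, (SimpleGraph.mem_neighborFinset G y x0).2 hadj0,
          x1, (SimpleGraph.mem_neighborFinset G y x1).2 (G.adj_symm hadj), hx01⟩
      · -- y < x1 so y = x0
        have hyx0 : y = x0 := by
          have := h.1
          rw [Fin.lt_def] at this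
          simp only [hx1] at this
          exact Fin.ext (by simp [hx0]; omega)
        rw [hyx0]
        exact hd0
  rw [Xor']
  by_cases hA : deg G x0 = 1 <;> by_cases hB : deg G x1 = 1
  · exact absurd ⟨hA, hB⟩ hnotboth
  · exact Or.inl ⟨hA, hB⟩
  · exact Or.inr ⟨hB, hA⟩
  · exact absurd ⟨hA, hB⟩ hnotnone

end Perm

section Rev

variable {n : ℕ} (π : Equiv.Perm (Fin n))

def revp : Equiv.Perm (Fin n) := (Fin.revPerm.trans π).trans Fin.revPerm

lemma revp_symm_apply (j : Fin n) : (revp π).symm j = (π.symm j.rev).rev := rfl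

lemma revp_adj (i j : Fin n) :
    (permGraph (revp π)).Adj i j ↔ (permGraph π).Adj i.rev j.rev := by
  simp only [permGraph_adj, revp_symm_apply, Fin.rev_lt_rev]
  tauto

lemma revp_conn (hconn : (permGraph π).Connected) : (permGraph (revp π)).Connected := by
  let hom : permGraph π →g permGraph (revp π) :=
    ⟨Fin.rev, fun {a b} h => (revp_adj π a.rev b.rev).2
      (by rwa [Fin.rev_rev, Fin.rev_rev])⟩
  haveI : Nonempty (Fin n) := hconn.nonempty
  refine ⟨fun u v => ?_⟩
  obtain ⟨p⟩ := hconn.preconnected u.rev v.rev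
  exact ⟨(p.map hom).copy (Fin.rev_rev u) (Fin.rev_rev v)⟩

lemma revp_dom : domNumber (permGraph (revp π)) = domNumber (permGraph π) := by
  unfold domNumber
  congr 1
  ext k
  simp only [Set.mem_setOf_eq]
  constructor
  · rintro ⟨D, hc, hd⟩
    refine ⟨D.image Fin.rev,
      by rw [Finset.card_image_of_injective _ Fin.rev_injective, hc], ?_⟩
    intro v
    rcases hd v.rev with h | ⟨e, he, hadj⟩
    · exact Or.inl (Finset.mem_coe.2 (Finset.mem_image.2
        ⟨v.rev, Finset.mem_coe.1 h, Fin.rev_rev v⟩))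
    · refine Or.inr ⟨e.rev, Finset.mem_coe.2 (Finset.mem_image.2
        ⟨e, Finset.mem_coe.1 he, rfl⟩), ?_⟩
      have := (revp_adj π v.rev e).1 hadj
      rwa [Fin.rev_rev] at this
  · rintro ⟨D, hc, hd⟩
    refine ⟨D.image Fin.rev,
      by rw [Finset.card_image_of_injective _ Fin.rev_injective, hc], ?_⟩
    intro v
    rcases hd v.rev with h | ⟨e, he, hadj⟩
    · exact Or.inl (Finset.mem_coe.2 (Finset.mem_image.2
        ⟨v.rev, Finset.mem_coe.1 h, Fin.rev_rev v⟩))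
    · refine Or.inr ⟨e.rev, Finset.mem_coe.2 (Finset.mem_image.2
        ⟨e, Finset.mem_coe.1 he, rfl⟩), ?_⟩
      apply (revp_adj π v e.rev).2
      rwa [Fin.rev_rev]

lemma revp_deg (k : Fin n) : deg (permGraph (revp π)) k = deg (permGraph π) k.rev := by
  rw [deg_eq_card, deg_eq_card]
  have himg : (permGraph (revp π)).neighborFinset k =
      ((permGraph π).neighborFinset k.rev).image Fin.rev := by
    ext u
    simp only [SimpleGraph.mem_neighborFinset, Finset.mem_image]
    constructor
    · intro h
      exact ⟨u.rev, (revp_adj π k u).1 h, Fin.rev_rev u⟩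
    · rintro ⟨s, hs, rfl⟩
      apply (revp_adj π k s.rev).2
      rwa [Fin.rev_rev]
  rw [himg, Finset.card_image_of_injective _ Fin.rev_injective]

end Rev

theorem half_domination_extremal_leaves {n : ℕ} (hn : 6 ≤ n) (hev : Even n)
    (π : Equiv.Perm (Fin n)) (hconn : (permGraph π).Connected)
    (hdom : domNumber (permGraph π) = n / 2) :
    Xor' (deg (permGraph π) ⟨0, by omega⟩ = 1) (deg (permGraph π) ⟨1, by omega⟩ = 1) ∧
    Xor' (deg (permGraph π) ⟨n - 2, by omega⟩ = 1)
      (deg (permGraph π) ⟨n - 1, by omega⟩ = 1) := by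
  constructor
  · exact partA hn hev π hconn hdom
  · have hconn' := revp_conn π hconn
    have hdom' : domNumber (permGraph (revp π)) = n / 2 := by rw [revp_dom]; exact hdom
    have hB := partA hn hev (revp π) hconn' hdom'
    rw [revp_deg, revp_deg] at hB
    have h1 : (⟨0, by omega⟩ : Fin n).rev = ⟨n - 1, by omega⟩ := by
      apply Fin.ext
      simp only [Fin.val_rev]
    have h2 : (⟨1, by omega⟩ : Fin n).rev = ⟨n - 2, by omega⟩ := by
      apply Fin.ext
      simp only [Fin.val_rev]
    rw [h1, h2] at hB
    exact hB.symm
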